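/- Let ψ(z) = ((z²+1)/(2z²), (i·cos t·(1 - z²) - 2iz·sin t)/(2z²), (2z·cos t + sin t·(1 - z²))/(2z²)) on ℂ \ {0}. Then the period ∮_γ ψ dz along the unit circle γ has real part (0, 2π·sin t, 0); in particular the real period vanishes if and only if sin t = 0. -/

import Mathlib

open Complex
set_option maxHeartbeats 1000000 in

lemma key_int (a b c : ℂ) :
    (∮ z in C(0, 1), (a * z ^ 2 + b * z + c) / (2 * z ^ 2)) = Real.pi * I * b := by
  have h0 : (0 : ℂ) ∉ Metric.sphere (0 : ℂ) |(1 : ℝ)| := by simp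
  have hi2 : CircleIntegrable (fun z : ℂ => (z - 0) ^ (-2 : ℤ)) 0 1 := by
    rw [circleIntegrable_sub_zpow_iff]; right; right; simpa using h0
  have hi1 : CircleIntegrable (fun z : ℂ => (z - 0) ^ (-1 : ℤ)) 0 1 := by
    rw [circleIntegrable_sub_zpow_iff]; right; right; simpa using h0
  have hi0 : CircleIntegrable (fun z : ℂ => (z - 0) ^ (0 : ℤ)) 0 1 := by
    rw [circleIntegrable_sub_zpow_iff]; right; left; norm_num
  have heq : Set.EqOn (fun z : ℂ => (a * z ^ 2 + b * z + c) / (2 * z ^ 2))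
      (fun z : ℂ => (a / 2) • (z - 0) ^ (0 : ℤ) + ((b / 2) • (z - 0) ^ (-1 : ℤ)
        + (c / 2) • (z - 0) ^ (-2 : ℤ))) (Metric.sphere (0 : ℂ) 1) := by
    intro z hz
    have hz0 : z ≠ 0 := by
      intro h; rw [h] at hz; simp at hz
    simp only [smul_eq_mul, sub_zero, zpow_neg, zpow_one, zpow_two, zpow_zero]
    rw [div_eq_iff (mul_ne_zero two_ne_zero (pow_ne_zero 2 hz0))]
    field_simp
    ring
  have h3 : ∀ {f g h : ℂ → ℂ}, CircleIntegrable f 0 1 → CircleIntegrable g 0 1 →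
      CircleIntegrable h 0 1 →
      (∮ z in C(0,1), f z + (g z + h z)) =
        (∮ z in C(0,1), f z) + ((∮ z in C(0,1), g z) + ∮ z in C(0,1), h z) := by
    intro f g h hf hg hh
    simp only [circleIntegral, smul_add]
    rw [intervalIntegral.integral_add hf.out (hg.out.add hh.out),
      intervalIntegral.integral_add hg.out hh.out]
  have hsmul : ∀ (a : ℂ) {f : ℂ → ℂ}, CircleIntegrable f 0 1 →
      CircleIntegrable (fun z => a • f z) 0 1 := fun a f hf => hf.smul a
  rw [circleIntegral.integral_congr (by norm_num) heq]
  rw [h3 (hsmul _ hi0) (hsmul _ hi1) (hsmul _ hi2)]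
  rw [circleIntegral.integral_smul, circleIntegral.integral_smul, circleIntegral.integral_smul]
  rw [circleIntegral.integral_sub_zpow_of_ne (n := 0) (by decide) 0 0 1,
    circleIntegral.integral_sub_zpow_of_ne (n := -2) (by decide) 0 0 1]
  have : (∮ z in C(0,1), (z - 0) ^ (-1 : ℤ)) = 2 * Real.pi * I := by
    simp only [zpow_neg, zpow_one]
    exact circleIntegral.integral_sub_inv_of_mem_ball (by simp)
  rw [this]
  simp [smul_eq_mul]
  ring


/-- The isotropic curve of the dual surface `C_t^♭` of the tilted Euclidean
catenoid has period along the unit circle with real part `(0, 2π·sin t, 0)`;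
in particular, the real period vanishes iff `sin t = 0`. -/
theorem dual_tilted_catenoid_periods (t : ℝ) :
    ((∮ z in C(0, 1), (z ^ 2 + 1) / (2 * z ^ 2)).re = 0 ∧
     (∮ z in C(0, 1),
        (I * (Real.cos t : ℂ) * (1 - z ^ 2) - 2 * I * z * (Real.sin t : ℂ))
          / (2 * z ^ 2)).re = 2 * Real.pi * Real.sin t ∧
     (∮ z in C(0, 1),
        (2 * z * (Real.cos t : ℂ) + (Real.sin t : ℂ) * (1 - z ^ 2))
          / (2 * z ^ 2)).re = 0) ∧
    (((∮ z in C(0, 1), (z ^ 2 + 1) / (2 * z ^ 2)).re = 0 ∧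
      (∮ z in C(0, 1),
        (I * (Real.cos t : ℂ) * (1 - z ^ 2) - 2 * I * z * (Real.sin t : ℂ))
          / (2 * z ^ 2)).re = 0 ∧
      (∮ z in C(0, 1),
        (2 * z * (Real.cos t : ℂ) + (Real.sin t : ℂ) * (1 - z ^ 2))
          / (2 * z ^ 2)).re = 0) ↔ Real.sin t = 0) := by
  have e1 : (∮ z in C(0, 1), (z ^ 2 + 1) / (2 * z ^ 2)) = Real.pi * I * 0 := by
    rw [← key_int 1 0 1]
    exact circleIntegral.integral_congr zero_le_one fun z _ => by ring
  have e2 : (∮ z in C(0, 1),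
      (I * (Real.cos t : ℂ) * (1 - z ^ 2) - 2 * I * z * (Real.sin t : ℂ)) / (2 * z ^ 2))
      = Real.pi * I * (-(2 * I * (Real.sin t : ℂ))) := by
    rw [← key_int (-(I * (Real.cos t : ℂ))) (-(2 * I * (Real.sin t : ℂ))) (I * (Real.cos t : ℂ))]
    exact circleIntegral.integral_congr zero_le_one fun z _ => by ring
  have e3 : (∮ z in C(0, 1),
      (2 * z * (Real.cos t : ℂ) + (Real.sin t : ℂ) * (1 - z ^ 2)) / (2 * z ^ 2))
      = Real.pi * I * (2 * (Real.cos t : ℂ)) := by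
    rw [← key_int (-(Real.sin t : ℂ)) (2 * (Real.cos t : ℂ)) (Real.sin t : ℂ)]
    exact circleIntegral.integral_congr zero_le_one fun z _ => by ring
  have v2 : (↑Real.pi * I * (-(2 * I * (Real.sin t : ℂ)))) = ((2 * Real.pi * Real.sin t : ℝ) : ℂ) := by
    rw [Complex.ofReal_mul, Complex.ofReal_mul]
    ring_nf
    rw [Complex.I_sq]
    push_cast
    ring
  rw [e1, e2, e3, v2]
  refine ⟨⟨by simp, Complex.ofReal_re _, by simp⟩, ?_⟩
  constructor
  · rintro ⟨-, h2, -⟩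
    rw [Complex.ofReal_re] at h2
    have hπ : (0:ℝ) < Real.pi := Real.pi_pos
    nlinarith [h2]
  · intro hs
    exact ⟨by simp, by rw [Complex.ofReal_re, hs]; ring, by simp⟩
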